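/- Let (Ω, F, P) be a probability space with filtration (F_m) generating F. Suppose Y_i^k ∈ L^q are uniformly bounded in L^q norm by c, that E[Y_i^k | F_{m_k}] = E[Y_1^k | F_{m_k}] for all i and k, that m_k → ∞, and that Y_i^k → Y_i^∞ in the weak* topology of L^q (1 < q ≤ ∞, dual to L^p). Then for any W_1,...,W_n ∈ L^p with sum_i W_i = 0, we have sum_i E[Y_i^∞ W_i] = 0; consequently Y_i^∞ = Y_j^∞ almost surely for all i, j. -/

import Mathlib

open MeasureTheory Filter
open scoped BigOperators ENNReal NNReal Topology

lemma aux_holder {Ω : Type*} {m0 : MeasurableSpace Ω} {μ : Measure Ω} {p q : ℝ≥0∞}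
    (hpq : 1 / p + 1 / q = 1) {f g : Ω → ℝ} (hf : MemLp f q μ) (hg : MemLp g p μ) :
    Integrable (fun ω => f ω * g ω) μ ∧
    |∫ ω, f ω * g ω ∂μ| ≤ (eLpNorm f q μ).toReal * (eLpNorm g p μ).toReal := by
  have hpqr : (1 : ℝ≥0∞) / 1 = 1 / q + 1 / p := by
    simpa [add_comm] using hpq.symm
  have hmem : MemLp (f • g) 1 μ := hg.smul hf (hpqr := ⟨by simpa [one_div] using hpqr.symm⟩)
  have hfg : (f • g) = fun ω => f ω * g ω := rfl
  rw [hfg] at hmem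
  have hint : Integrable (fun ω => f ω * g ω) μ := memLp_one_iff_integrable.mp hmem
  refine ⟨hint, ?_⟩
  have h1 : |∫ ω, f ω * g ω ∂μ| ≤ ∫ ω, ‖f ω * g ω‖ ∂μ := by
    simpa using norm_integral_le_integral_norm (fun ω => f ω * g ω)
  have h2 : ∫ ω, ‖f ω * g ω‖ ∂μ = (eLpNorm (fun ω => f ω * g ω) 1 μ).toReal := by
    rw [integral_norm_eq_lintegral_enorm hmem.1, eLpNorm_one_eq_lintegral_enorm]
  have h3 : eLpNorm (fun ω => f ω * g ω) 1 μ ≤ eLpNorm f q μ * eLpNorm g p μ := by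
    rw [← hfg]
    exact eLpNorm_smul_le_mul_eLpNorm hg.1 hf.1 (hpqr := ⟨by simpa [one_div] using hpqr.symm⟩)
  refine h1.trans ?_
  rw [h2, ← ENNReal.toReal_mul]
  exact ENNReal.toReal_mono (ENNReal.mul_ne_top hf.eLpNorm_ne_top hg.eLpNorm_ne_top) h3

lemma aux_approx {Ω : Type*} {mΩ : MeasurableSpace Ω} {μ : Measure Ω} [IsProbabilityMeasure μ]
    (F : ℕ → MeasurableSpace Ω) (hmono : Monotone F) (hle : ∀ m, F m ≤ mΩ)
    (hgen : (⨆ m, F m) = mΩ) {p : ℝ≥0∞} (hp : 1 ≤ p) (hp' : p ≠ ∞)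
    {W : Ω → ℝ} (hW : MemLp W p μ) {ε : ℝ} (hε : 0 < ε) :
    ∃ (N : ℕ) (g : Ω → ℝ) (R : ℝ≥0), StronglyMeasurable[F N] g ∧ (∀ᵐ ω ∂μ, |g ω| ≤ R)
      ∧ eLpNorm (W - g) p μ ≤ ENNReal.ofReal ε := by
  set ℱ : Filtration ℕ mΩ := ⟨F, hmono, hle⟩ with hℱ
  have hε2 : (0:ℝ≥0∞) < ENNReal.ofReal (ε/2) := ENNReal.ofReal_pos.mpr (half_pos hε)
  obtain ⟨s, hs_lt, hs_mem⟩ := hW.exists_simpleFunc_eLpNorm_sub_lt hp' hε2.ne'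
  obtain ⟨C, hC⟩ := s.exists_forall_norm_le
  set R : ℝ≥0 := C.toNNReal with hR
  have hsbd : ∀ ω, |s ω| ≤ (R : ℝ) := fun ω =>
    (hC ω).trans (Real.le_coe_toNNReal C)
  have hsint : Integrable s μ := hs_mem.integrable hp
  have hcond_bd : ∀ N : ℕ, ∀ᵐ ω ∂μ, |(μ[⇑s|F N]) ω| ≤ (R:ℝ) := fun N =>
    ae_bdd_condExp_of_ae_bdd (Eventually.of_forall hsbd)
  have hmeas : ∀ N : ℕ, AEStronglyMeasurable (μ[⇑s|F N]) μ := fun N =>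
    (stronglyMeasurable_condExp.mono (hle N)).aestronglyMeasurable
  -- a.e. convergence (Lévy upward)
  have hsup : (⨆ n, (ℱ n : MeasurableSpace Ω)) = mΩ := hgen
  have hcondtop : μ[⇑s|⨆ n, (ℱ n : MeasurableSpace Ω)] = ⇑s := by
    rw [hsup]
    exact condExp_of_stronglyMeasurable le_rfl s.stronglyMeasurable hsint
  have hae : ∀ᵐ ω ∂μ, Tendsto (fun N => (μ[⇑s|F N]) ω) atTop (𝓝 (s ω)) := by
    have := MeasureTheory.tendsto_ae_condExp (ℱ := ℱ) (μ := μ) ⇑s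
    rw [hcondtop] at this
    exact this
  -- uniform integrability from boundedness
  have hui : UnifIntegrable (fun N => μ[⇑s|F N]) p μ := by
    refine unifIntegrable_of hp hp' hmeas fun δ hδ => ⟨R + 1, fun N => ?_⟩
    have h0 : { x | (R:ℝ≥0) + 1 ≤ ‖(μ[⇑s|F N]) x‖₊ }.indicator (μ[⇑s|F N]) =ᵐ[μ] 0 := by
      filter_upwards [hcond_bd N] with ω hω
      rw [Set.indicator_of_notMem]
      · rfl
      · intro hmem
        have h1 : ((R:ℝ≥0) + 1 : ℝ≥0) ≤ ‖(μ[⇑s|F N]) ω‖₊ := hmem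
        have h2 : ‖(μ[⇑s|F N]) ω‖ ≤ (R:ℝ) := by rwa [Real.norm_eq_abs]
        have h3 : ((R:ℝ) + 1) ≤ ‖(μ[⇑s|F N]) ω‖ := by exact_mod_cast h1
        linarith
    rw [eLpNorm_congr_ae h0, eLpNorm_zero]
    exact zero_le
  have htends : Tendsto (fun N => eLpNorm (μ[⇑s|F N] - ⇑s) p μ) atTop (𝓝 0) :=
    tendsto_Lp_finite_of_tendsto_ae hp hp' hmeas hs_mem hui hae
  obtain ⟨N, hN⟩ := (htends.eventually (gt_mem_nhds hε2)).exists
  refine ⟨N, μ[⇑s|F N], R, stronglyMeasurable_condExp, hcond_bd N, ?_⟩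
  have hsplit : W - μ[⇑s|F N] = (W - ⇑s) + (⇑s - μ[⇑s|F N]) := by ring
  rw [hsplit]
  calc eLpNorm ((W - ⇑s) + (⇑s - μ[⇑s|F N])) p μ
      ≤ eLpNorm (W - ⇑s) p μ + eLpNorm (⇑s - μ[⇑s|F N]) p μ :=
        eLpNorm_add_le (hW.1.sub hs_mem.1) (hs_mem.1.sub (hmeas N)) hp
    _ ≤ ENNReal.ofReal (ε/2) + ENNReal.ofReal (ε/2) := by
        refine add_le_add hs_lt.le ?_
        rw [eLpNorm_sub_comm]
        exact hN.le
    _ = ENNReal.ofReal ε := by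
        rw [← ENNReal.ofReal_add (half_pos hε).le (half_pos hε).le, add_halves]

/-- let `(F_m)` be a filtration generating `F`. Suppose the `Y_i^k ∈ L^q`
are uniformly bounded in `L^q` norm by `c`, satisfy `E[Y_i^k | F_{m_k}] = E[Y_1^k | F_{m_k}]`
for all `i, k`, that `m_k → ∞`, and that `Y_i^k → Y_i^∞` in the weak* topology of `L^q`
(dual to `L^p`). Then `∑ i, E[Y_i^∞ W_i] = 0` whenever `W_i ∈ L^p` with `∑ i W_i = 0`;
consequently `Y_i^∞ = Y_j^∞` a.s. for all `i, j`. -/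
theorem weakstar_limit_of_conditionally_agreeing_densities
    {Ω : Type*} {mΩ : MeasurableSpace Ω} (μ : Measure Ω) [IsProbabilityMeasure μ]
    (F : ℕ → MeasurableSpace Ω) (hmono : Monotone F) (hle : ∀ m, F m ≤ mΩ)
    (hgen : (⨆ m, F m) = mΩ)
    (p q : ℝ≥0∞) (hp : 1 ≤ p) (hp' : p ≠ ∞) (hq : 1 < q) (hpq : 1 / p + 1 / q = 1)
    (n : ℕ) (hn : 2 ≤ n)
    (Y : ℕ → Fin n → Ω → ℝ) (Ylim : Fin n → Ω → ℝ)
    (hYq : ∀ k i, MemLp (Y k i) q μ) (hYlimq : ∀ i, MemLp (Ylim i) q μ)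
    (c : ℝ≥0∞) (hc : c ≠ ∞) (hbdd : ∀ k i, eLpNorm (Y k i) q μ ≤ c)
    (m : ℕ → ℕ) (hm : Tendsto m atTop atTop)
    (hagree : ∀ k, ∀ i : Fin n, μ[Y k i|F (m k)] =ᵐ[μ] μ[Y k ⟨0, by omega⟩|F (m k)])
    (hweak : ∀ i : Fin n, ∀ W : Ω → ℝ, MemLp W p μ →
      Tendsto (fun k => ∫ ω, Y k i ω * W ω ∂μ) atTop (𝓝 (∫ ω, Ylim i ω * W ω ∂μ))) :
    (∀ W : Fin n → Ω → ℝ, (∀ i, MemLp (W i) p μ) → (∑ i, W i) = 0 →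
      ∑ i, ∫ ω, Ylim i ω * W i ω ∂μ = 0) ∧
    ∀ i j, Ylim i =ᵐ[μ] Ylim j := by
  have hn0 : 0 < n := by omega
  have hc0 : (0:ℝ) ≤ c.toReal := ENNReal.toReal_nonneg
  have part1 : ∀ W : Fin n → Ω → ℝ, (∀ i, MemLp (W i) p μ) → (∑ i, W i) = 0 →
      ∑ i, ∫ ω, Ylim i ω * W i ω ∂μ = 0 := by
    intro W hWp hWsum
    set L := ∑ i, ∫ ω, Ylim i ω * W i ω ∂μ with hL
    have hconv : Tendsto (fun k => ∑ i, ∫ ω, Y k i ω * W i ω ∂μ) atTop (𝓝 L) :=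
      tendsto_finset_sum _ (fun i _ => hweak i (W i) (hWp i))
    have key : ∀ ε : ℝ, 0 < ε → |L| ≤ ε := by
      intro ε hε
      set i₀ : Fin n := ⟨0, by omega⟩ with hi₀
      set δ : ℝ := ε / ((n:ℝ) * n * (c.toReal + 1)) with hδ
      have hδpos : 0 < δ := by
        apply div_pos hε
        have : (0:ℝ) < n := by exact_mod_cast hn0
        positivity
      choose N g R hgmeas hgbd hgapp using
        fun i : Fin n => aux_approx F hmono hle hgen hp hp' (hWp i) hδpos
      set N₀ : ℕ := Finset.univ.sup N with hN₀
      have hNle : ∀ i, F (N i) ≤ F N₀ := fun i => hmono (Finset.le_sup (Finset.mem_univ i))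
      set g' : Fin n → Ω → ℝ :=
        fun i => if i = i₀ then -∑ j ∈ Finset.univ.erase i₀, g j else g i with hg'
      have hg'meas : ∀ i, StronglyMeasurable[F N₀] (g' i) := by
        intro i
        simp only [hg']
        split_ifs
        · exact (Finset.stronglyMeasurable_sum _
            (fun j _ => (hgmeas j).mono (hNle j))).neg
        · exact (hgmeas i).mono (hNle i)
      set B : ℝ≥0 := ∑ j, R j with hB
      have hg'bd : ∀ i, ∀ᵐ ω ∂μ, |g' i ω| ≤ (B:ℝ) := by
        intro i
        filter_upwards [ae_all_iff.2 hgbd] with ω hω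
        simp only [hg']
        have hsumB : ∀ s : Finset (Fin n), |∑ j ∈ s, g j ω| ≤ (B:ℝ) := by
          intro s
          calc |∑ j ∈ s, g j ω| ≤ ∑ j ∈ s, |g j ω| := Finset.abs_sum_le_sum_abs _ _
            _ ≤ ∑ j ∈ s, (R j : ℝ) := Finset.sum_le_sum (fun j _ => hω j)
            _ ≤ ∑ j, (R j : ℝ) := by
                refine Finset.sum_le_sum_of_subset_of_nonneg (Finset.subset_univ s) ?_
                intro j _ _; positivity
            _ = (B:ℝ) := by rw [hB]; push_cast; ring
        split_ifs
        · have hev : (-∑ j ∈ Finset.univ.erase i₀, g j) ω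
              = -∑ j ∈ Finset.univ.erase i₀, g j ω := by
            simp [Finset.sum_apply]
          rw [hev, abs_neg]; exact hsumB _
        · refine (hω i).trans ?_
          have hle' : ((R i : ℝ)) ≤ ∑ j, (R j : ℝ) :=
            Finset.single_le_sum (fun j _ => (R j).coe_nonneg) (Finset.mem_univ i)
          rw [hB, NNReal.coe_sum]
          exact hle'
      have hg'memp : ∀ i, MemLp (g' i) p μ := fun i =>
        MemLp.of_bound ((hg'meas i).mono ((hNle i).trans (hle N₀) |> fun _ => hle N₀)).aestronglyMeasurable _ (by
          filter_upwards [hg'bd i] with ω hω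
          rwa [Real.norm_eq_abs])
      have hsum0 : ∀ ω, ∑ i, g' i ω = 0 := by
        intro ω
        rw [← Finset.add_sum_erase _ _ (Finset.mem_univ i₀)]
        have : ∀ j ∈ Finset.univ.erase i₀, g' j ω = g j ω := by
          intro j hj
          simp only [hg']
          simp [Finset.ne_of_mem_erase hj]
        rw [Finset.sum_congr rfl this, hg']
        simp
      -- approximation bound for each i
      have happ : ∀ i, eLpNorm (W i - g' i) p μ ≤ ENNReal.ofReal ((n:ℝ) * δ) := by
        intro i
        by_cases hii : i = i₀
        · have hgi : g' i = -∑ j ∈ Finset.univ.erase i₀, g j := by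
            simp only [hg']
            rw [if_pos hii]
          have hrw : W i - g' i = ∑ j ∈ Finset.univ.erase i₀, (g j - W j)
              + (W i + ∑ j ∈ Finset.univ.erase i₀, W j) := by
            funext ω
            have h1 := congrFun hgi ω
            simp only [Pi.sub_apply, Pi.add_apply, Pi.neg_apply, Finset.sum_apply] at h1 ⊢
            rw [h1, Finset.sum_sub_distrib]
            ring
          have hWzero : W i + ∑ j ∈ Finset.univ.erase i₀, W j = 0 := by
            rw [hii]
            have := hWsum
            rw [← Finset.add_sum_erase _ _ (Finset.mem_univ i₀)] at this
            exact this
          rw [hrw, hWzero, add_zero]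
          calc eLpNorm (∑ j ∈ Finset.univ.erase i₀, (g j - W j)) p μ
              ≤ ∑ j ∈ Finset.univ.erase i₀, eLpNorm (g j - W j) p μ :=
                eLpNorm_sum_le (fun j _ =>
                  (((hgmeas j).mono (hle (N j))).aestronglyMeasurable).sub (hWp j).1) hp
            _ ≤ ∑ j ∈ Finset.univ.erase i₀, ENNReal.ofReal δ := by
                refine Finset.sum_le_sum (fun j _ => ?_)
                rw [eLpNorm_sub_comm]
                exact hgapp j
            _ ≤ (n:ℕ) • ENNReal.ofReal δ := by
                refine Finset.sum_le_card_nsmul _ _ _ (fun j _ => le_rfl) |>.trans ?_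
                exact nsmul_le_nsmul_left zero_le (Finset.card_le_univ _ |>.trans (by simp))
            _ = ENNReal.ofReal ((n:ℝ) * δ) := by
                rw [nsmul_eq_mul, ENNReal.ofReal_mul (by positivity)]
                simp [ENNReal.ofReal_natCast]
        · have : g' i = g i := by simp only [hg']; simp [hii]
          rw [this]
          refine (hgapp i).trans (ENNReal.ofReal_le_ofReal ?_)
          nlinarith [hδpos.le, (show (2:ℝ) ≤ n by exact_mod_cast hn)]
      -- eventual bound on the prelimit sums
      have hev : ∀ᶠ k in atTop, |∑ i, ∫ ω, Y k i ω * W i ω ∂μ| ≤ ε := by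
        filter_upwards [hm.eventually_ge_atTop N₀] with k hk
        have hmk : F N₀ ≤ F (m k) := hmono hk
        have hYint : ∀ i : Fin n, Integrable (Y k i) μ := fun i => (hYq k i).integrable hq.le
        -- the g' part of the sum vanishes
        have hzero : ∑ i, ∫ ω, Y k i ω * g' i ω ∂μ = 0 := by
          set E : Ω → ℝ := μ[Y k i₀|F (m k)] with hE
          have hstep : ∀ i : Fin n, ∫ ω, Y k i ω * g' i ω ∂μ = ∫ ω, g' i ω * E ω ∂μ := by
            intro i
            have hint : Integrable (fun ω => g' i ω * Y k i ω) μ :=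
              (hYint i).bdd_mul ((hg'meas i).mono ((hle N₀))).aestronglyMeasurable
                (by filter_upwards [hg'bd i] with ω hω; rwa [Real.norm_eq_abs])
            have h1 : ∫ ω, Y k i ω * g' i ω ∂μ = ∫ ω, g' i ω * Y k i ω ∂μ := by
              congr 1; funext ω; ring
            have h2 : ∫ ω, g' i ω * Y k i ω ∂μ = ∫ ω, (μ[fun ω => g' i ω * Y k i ω|F (m k)]) ω ∂μ :=
              (integral_condExp (hle (m k)) ).symm
            have h3 : μ[fun ω => g' i ω * Y k i ω|F (m k)] =ᵐ[μ] g' i * μ[Y k i|F (m k)] :=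
              condExp_stronglyMeasurable_mul_of_bound (hle (m k))
                ((hg'meas i).mono hmk) (hYint i) B
                (by filter_upwards [hg'bd i] with ω hω; rwa [Real.norm_eq_abs])
            have h4 : (g' i * μ[Y k i|F (m k)] : Ω → ℝ) =ᵐ[μ] fun ω => g' i ω * E ω := by
              filter_upwards [hagree k i] with ω hω
              simp only [Pi.mul_apply, hE, hω]
            rw [h1, h2, integral_congr_ae (h3.trans h4)]
          rw [Finset.sum_congr rfl (fun i _ => hstep i), ← integral_finset_sum]
          · have : ∀ ω, ∑ i, g' i ω * E ω = 0 := by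
              intro ω
              rw [← Finset.sum_mul, hsum0, zero_mul]
            simp only [this, integral_zero]
          · intro i _
            exact integrable_condExp.bdd_mul
              ((hg'meas i).mono (hle N₀)).aestronglyMeasurable
              (by filter_upwards [hg'bd i] with ω hω; rwa [Real.norm_eq_abs])
        -- decompose
        have hdecomp : ∑ i, ∫ ω, Y k i ω * W i ω ∂μ
            = ∑ i, ∫ ω, Y k i ω * (W i ω - g' i ω) ∂μ := by
          rw [← sub_eq_zero, ← Finset.sum_sub_distrib]
          rw [← hzero]
          refine Finset.sum_congr rfl (fun i _ => ?_)
          have hint1 : Integrable (fun ω => Y k i ω * W i ω) μ :=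
            (aux_holder hpq (hYq k i) (hWp i)).1
          have hint2 : Integrable (fun ω => Y k i ω * g' i ω) μ :=
            (aux_holder hpq (hYq k i) (hg'memp i)).1
          have hsame : ∫ ω, Y k i ω * (W i ω - g' i ω) ∂μ
              = ∫ ω, Y k i ω * W i ω ∂μ - ∫ ω, Y k i ω * g' i ω ∂μ := by
            rw [← integral_sub hint1 hint2]
            congr 1; funext ω; ring
          rw [hsame]; ring
        rw [hdecomp]
        calc |∑ i, ∫ ω, Y k i ω * (W i ω - g' i ω) ∂μ|
            ≤ ∑ i, |∫ ω, Y k i ω * (W i ω - g' i ω) ∂μ| := Finset.abs_sum_le_sum_abs _ _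
          _ ≤ ∑ i : Fin n, c.toReal * ((n:ℝ) * δ) := by
              refine Finset.sum_le_sum (fun i _ => ?_)
              have hWg : MemLp (fun ω => W i ω - g' i ω) p μ := (hWp i).sub (hg'memp i)
              have hhold := (aux_holder hpq (hYq k i) hWg).2
              refine hhold.trans ?_
              have ht1 : (eLpNorm (Y k i) q μ).toReal ≤ c.toReal :=
                ENNReal.toReal_mono hc (hbdd k i)
              have ht2 : (eLpNorm (fun ω => W i ω - g' i ω) p μ).toReal ≤ (n:ℝ) * δ := by
                have := happ i
                have h' : (eLpNorm (fun ω => W i ω - g' i ω) p μ).toReal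
                    ≤ (ENNReal.ofReal ((n:ℝ)*δ)).toReal := by
                  refine ENNReal.toReal_mono ENNReal.ofReal_ne_top ?_
                  exact this
                rwa [ENNReal.toReal_ofReal (by positivity)] at h'
              have h0 : (0:ℝ) ≤ (eLpNorm (fun ω => W i ω - g' i ω) p μ).toReal :=
                ENNReal.toReal_nonneg
              nlinarith [ENNReal.toReal_nonneg (a := eLpNorm (Y k i) q μ)]
          _ = (n:ℝ) * (c.toReal * ((n:ℝ) * δ)) := by
              rw [Finset.sum_const, Finset.card_univ, Fintype.card_fin, nsmul_eq_mul]
          _ ≤ ε := by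
              rw [hδ]
              have hnR : (0:ℝ) < n := by exact_mod_cast hn0
              rw [div_eq_mul_inv]
              have hpos : (0:ℝ) < (n:ℝ) * n * (c.toReal + 1) := by positivity
              field_simp
              nlinarith [hε.le]
      exact le_of_tendsto (hconv.abs) hev
    by_contra hLne
    have habs : 0 < |L| := abs_pos.mpr (by rw [hL] at hLne ⊢; exact hLne)
    have := key (|L|/2) (by linarith)
    linarith
  refine ⟨part1, ?_⟩
  -- part 2
  intro i j
  by_cases hij : i = j
  · rw [hij]
  have hint_i : Integrable (Ylim i) μ := (hYlimq i).integrable hq.le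
  have hint_j : Integrable (Ylim j) μ := (hYlimq j).integrable hq.le
  have hpair : ∀ f : Ω → ℝ, MemLp f p μ →
      ∫ ω, Ylim i ω * f ω ∂μ = ∫ ω, Ylim j ω * f ω ∂μ := by
    intro f hf
    set W : Fin n → Ω → ℝ :=
      fun l ω => ((if l = i then (1:ℝ) else 0) - (if l = j then (1:ℝ) else 0)) * f ω with hW
    have hWp : ∀ l, MemLp (W l) p μ := by
      intro l
      simp only [hW]
      exact hf.const_mul _
    have hWsum : (∑ l, W l) = 0 := by
      funext ω
      rw [Finset.sum_apply]
      simp only [hW, ← Finset.sum_mul, Pi.zero_apply]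
      rw [Finset.sum_sub_distrib]
      rw [Finset.sum_ite_eq' Finset.univ i (fun _ => (1:ℝ)),
        Finset.sum_ite_eq' Finset.univ j (fun _ => (1:ℝ))]
      simp
    have := part1 W hWp hWsum
    have hsplit : ∀ l : Fin n, ∫ ω, Ylim l ω * W l ω ∂μ
        = ((if l = i then (1:ℝ) else 0) - (if l = j then (1:ℝ) else 0)) * ∫ ω, Ylim l ω * f ω ∂μ := by
      intro l
      rw [← integral_const_mul]
      congr 1; funext ω; simp only [hW]; ring
    have hsplit2 : ∀ l : Fin n,
        ((if l = i then (1:ℝ) else 0) - (if l = j then (1:ℝ) else 0)) * ∫ ω, Ylim l ω * f ω ∂μ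
        = (if l = i then ∫ ω, Ylim l ω * f ω ∂μ else 0)
          - (if l = j then ∫ ω, Ylim l ω * f ω ∂μ else 0) := by
      intro l
      have hji : ¬ j = i := fun h => hij h.symm
      by_cases h1 : l = i <;> by_cases h2 : l = j <;>
        first
          | exact absurd (h1.symm.trans h2) hij
          | simp [h1, h2, hij, hji]
    rw [Finset.sum_congr rfl (fun l _ => (hsplit l).trans (hsplit2 l)),
      Finset.sum_sub_distrib, Finset.sum_ite_eq' Finset.univ i,
      Finset.sum_ite_eq' Finset.univ j] at this
    simp only [Finset.mem_univ, if_true] at this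
    linarith
  have hzero : ∀ s, MeasurableSet s → μ s < ∞ →
      ∫ ω in s, (Ylim i ω - Ylim j ω) ∂μ = 0 := by
    intro s hs _
    have hf : MemLp (s.indicator fun _ => (1:ℝ)) p μ :=
      memLp_indicator_const p hs 1 (Or.inr (measure_ne_top μ s))
    have hij' := hpair _ hf
    have hrw : ∀ h : Ω → ℝ, (fun ω => h ω * s.indicator (fun _ => (1:ℝ)) ω) = s.indicator h := by
      intro h; funext ω
      by_cases hω : ω ∈ s <;>
        simp [Set.indicator_of_mem, Set.indicator_of_notMem, hω]
    rw [show (fun ω => Ylim i ω * s.indicator (fun _ => (1:ℝ)) ω) = s.indicator (Ylim i) from hrw _,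
      show (fun ω => Ylim j ω * s.indicator (fun _ => (1:ℝ)) ω) = s.indicator (Ylim j) from hrw _,
      integral_indicator hs, integral_indicator hs] at hij'
    rw [integral_sub hint_i.integrableOn hint_j.integrableOn, hij', sub_self]
  have hae := (hint_i.sub hint_j).ae_eq_zero_of_forall_setIntegral_eq_zero hzero
  filter_upwards [hae] with ω hω
  have : Ylim i ω - Ylim j ω = 0 := hω
  linarith
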